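/- The families 𝓕⁻ and 𝓕⁺ of invariant faces of a payment-free Shapley operator are uniquely determined by the supports of the transition probabilities: if (P_i^{ab}) and (Q_i^{ab}) are two families of transition probability vectors over the same state space and action sets with P_{ij}^{ab} > 0 if and only if Q_{ij}^{ab} > 0 for all i, j, a, b, then 𝓕⁻(F_P) = 𝓕⁻(F_Q) and 𝓕⁺(F_P) = 𝓕⁺(F_Q). -/
import Mathlib


/-- The payment-free Shapley operator associated with transition probabilities `P`. -/
noncomputable def paymentFreeShapley {n : ℕ} {A : Fin n → Type*} {B : ∀ i, A i → Type*}
    [∀ i, Fintype (A i)] [∀ i, Nonempty (A i)]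
    [∀ i a, Fintype (B i a)] [∀ i a, Nonempty (B i a)]
    (P : ∀ i (a : A i), B i a → Fin n → ℝ) :
    (Fin n → ℝ) → (Fin n → ℝ) :=
  fun x i => ⨅ a : A i, ⨆ b : B i a, ∑ j, P i a b j * x j

/-- The indicator vector `𝟏_K` of a set of states `K`. -/
noncomputable def indic {n : ℕ} (K : Set (Fin n)) : Fin n → ℝ :=
  K.indicator fun _ => (1 : ℝ)

/-- The family `𝓕⁻ = { I ⊆ S : F(𝟏_{S∖I}) ≤ 𝟏_{S∖I} }`. -/
def Fminus {n : ℕ} (F : (Fin n → ℝ) → (Fin n → ℝ)) : Set (Set (Fin n)) :=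
  {I | F (indic Iᶜ) ≤ indic Iᶜ}

/-- The family `𝓕⁺ = { J ⊆ S : 𝟏_J ≤ F(𝟏_J) }`. -/
def Fplus {n : ℕ} (F : (Fin n → ℝ) → (Fin n → ℝ)) : Set (Set (Fin n)) :=
  {J | indic J ≤ F (indic J)}

/-- `Φ(I)`, the union of all `J ∈ 𝓕⁺` disjoint from `I`. -/
def Phi {n : ℕ} (F : (Fin n → ℝ) → (Fin n → ℝ)) (I : Set (Fin n)) : Set (Fin n) :=
  ⋃₀ {J | J ∈ Fplus F ∧ I ∩ J = ∅}

/-- `Φ*(J)`, the union of all `I ∈ 𝓕⁻` disjoint from `J`. -/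
def PhiStar {n : ℕ} (F : (Fin n → ℝ) → (Fin n → ℝ)) (J : Set (Fin n)) : Set (Fin n) :=
  ⋃₀ {I | I ∈ Fminus F ∧ I ∩ J = ∅}

set_option linter.unusedSectionVars false

section AuxSupport

variable {n : ℕ} {A : Fin n → Type*} {B : ∀ i, A i → Type*}
    [∀ i, Fintype (A i)] [∀ i, Nonempty (A i)]
    [∀ i a, Fintype (B i a)] [∀ i a, Nonempty (B i a)]

lemma indic_nonneg' {K : Set (Fin n)} (j : Fin n) : 0 ≤ indic K j :=
  Set.indicator_nonneg (fun _ _ => zero_le_one) j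

lemma indic_le_one' {K : Set (Fin n)} (j : Fin n) : indic K j ≤ 1 := by
  unfold indic
  by_cases h : j ∈ K <;> simp [h]

lemma indic_mem {K : Set (Fin n)} {j : Fin n} (h : j ∈ K) : indic K j = 1 := by
  simp [indic, h]

lemma indic_not_mem {K : Set (Fin n)} {j : Fin n} (h : j ∉ K) : indic K j = 0 := by
  simp [indic, h]

lemma sum_term_nonneg (P : ∀ i (a : A i), B i a → Fin n → ℝ)
    (hP0 : ∀ i a b j, 0 ≤ P i a b j) (K : Set (Fin n)) (i : Fin n) (a : A i) (b : B i a) :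
    0 ≤ ∑ j, P i a b j * indic K j :=
  Finset.sum_nonneg fun j _ => mul_nonneg (hP0 i a b j) (indic_nonneg' j)

lemma sum_term_le_one (P : ∀ i (a : A i), B i a → Fin n → ℝ)
    (hP0 : ∀ i a b j, 0 ≤ P i a b j) (hP1 : ∀ i a b, ∑ j, P i a b j = 1)
    (K : Set (Fin n)) (i : Fin n) (a : A i) (b : B i a) :
    ∑ j, P i a b j * indic K j ≤ 1 := by
  calc ∑ j, P i a b j * indic K j ≤ ∑ j, P i a b j := by
        exact Finset.sum_le_sum fun j _ =>
          mul_le_of_le_one_right (hP0 i a b j) (indic_le_one' j)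
    _ = 1 := hP1 i a b

/-- Characterization of `𝓕⁻` via supports. -/
lemma fminus_char (P : ∀ i (a : A i), B i a → Fin n → ℝ)
    (hP0 : ∀ i a b j, 0 ≤ P i a b j) (hP1 : ∀ i a b, ∑ j, P i a b j = 1) :
    Fminus (paymentFreeShapley P) =
      {I | ∀ i ∈ I, ∃ a : A i, ∀ b : B i a, ∀ j ∉ I, P i a b j = 0} := by
  ext I
  constructor
  · intro hI i hi
    have h0 : paymentFreeShapley P (indic Iᶜ) i ≤ 0 := by
      have := hI i
      rwa [indic_not_mem (by simp [hi] : i ∉ Iᶜ)] at this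
    obtain ⟨a, ha⟩ := Finite.exists_min fun a : A i =>
      ⨆ b : B i a, ∑ j, P i a b j * indic Iᶜ j
    have hinf : (⨆ b : B i a, ∑ j, P i a b j * indic Iᶜ j) ≤ 0 := by
      have : paymentFreeShapley P (indic Iᶜ) i =
          ⨅ a : A i, ⨆ b : B i a, ∑ j, P i a b j * indic Iᶜ j := rfl
      rw [this] at h0
      calc (⨆ b : B i a, ∑ j, P i a b j * indic Iᶜ j)
          = ⨅ a : A i, ⨆ b : B i a, ∑ j, P i a b j * indic Iᶜ j :=
            le_antisymm (le_ciInf ha)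
              (ciInf_le (Finite.bddBelow_range _) a)
        _ ≤ 0 := h0
    refine ⟨a, fun b j hj => ?_⟩
    have hb : ∑ j, P i a b j * indic Iᶜ j ≤ 0 :=
      le_trans (le_ciSup (f := fun b : B i a => ∑ j, P i a b j * indic Iᶜ j) (Finite.bddAbove_range _) b) hinf
    have hsum0 : ∑ j, P i a b j * indic Iᶜ j = 0 :=
      le_antisymm hb (sum_term_nonneg P hP0 _ i a b)
    have := (Finset.sum_eq_zero_iff_of_nonneg
      (fun j _ => mul_nonneg (hP0 i a b j) (indic_nonneg' j))).mp hsum0 j (Finset.mem_univ j)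
    rw [indic_mem (by simp [hj] : j ∈ Iᶜ), mul_one] at this
    exact this
  · intro hI i
    by_cases hi : i ∈ I
    · obtain ⟨a, ha⟩ := hI i hi
      rw [indic_not_mem (by simp [hi] : i ∉ Iᶜ)]
      refine le_trans (ciInf_le (Finite.bddBelow_range _) a) (ciSup_le fun b => ?_)
      have : ∑ j, P i a b j * indic Iᶜ j = 0 := by
        apply Finset.sum_eq_zero
        intro j _
        by_cases hj : j ∈ I
        · rw [indic_not_mem (by simp [hj] : j ∉ Iᶜ), mul_zero]
        · rw [ha b j hj, zero_mul]
      exact le_of_eq this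
    · rw [indic_mem (by simp [hi] : i ∈ Iᶜ)]
      obtain ⟨a⟩ := ‹∀ i, Nonempty (A i)› i
      exact le_trans (ciInf_le (Finite.bddBelow_range _) a)
        (ciSup_le fun b => sum_term_le_one P hP0 hP1 _ i a b)

/-- Characterization of `𝓕⁺` via supports. -/
lemma fplus_char (P : ∀ i (a : A i), B i a → Fin n → ℝ)
    (hP0 : ∀ i a b j, 0 ≤ P i a b j) (hP1 : ∀ i a b, ∑ j, P i a b j = 1) :
    Fplus (paymentFreeShapley P) =
      {J | ∀ i ∈ J, ∀ a : A i, ∃ b : B i a, ∀ j ∉ J, P i a b j = 0} := by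
  ext J
  constructor
  · intro hJ i hi a
    have h1 : (1 : ℝ) ≤ paymentFreeShapley P (indic J) i := by
      have := hJ i
      rwa [indic_mem hi] at this
    have ha : (1 : ℝ) ≤ ⨆ b : B i a, ∑ j, P i a b j * indic J j :=
      le_trans h1 (ciInf_le (Finite.bddBelow_range _) a)
    obtain ⟨b, hb⟩ := Finite.exists_max fun b : B i a => ∑ j, P i a b j * indic J j
    have hb1 : (1 : ℝ) ≤ ∑ j, P i a b j * indic J j := by
      calc (1:ℝ) ≤ ⨆ b : B i a, ∑ j, P i a b j * indic J j := ha
        _ = ∑ j, P i a b j * indic J j :=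
          le_antisymm (ciSup_le hb) (le_ciSup (f := fun b : B i a => ∑ j, P i a b j * indic J j) (Finite.bddAbove_range _) b)
    refine ⟨b, fun j hj => ?_⟩
    have hsum : ∑ j, P i a b j * indic J j = 1 :=
      le_antisymm (sum_term_le_one P hP0 hP1 _ i a b) hb1
    have hdiff : ∑ j, P i a b j * (1 - indic J j) = 0 := by
      have : ∑ j, P i a b j * (1 - indic J j)
          = (∑ j, P i a b j) - ∑ j, P i a b j * indic J j := by
        rw [← Finset.sum_sub_distrib]
        congr 1; ext j; ring
      rw [this, hP1 i a b, hsum, sub_self]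
    have := (Finset.sum_eq_zero_iff_of_nonneg
      (fun j _ => mul_nonneg (hP0 i a b j)
        (by linarith [indic_le_one' (K := J) j]))).mp hdiff j (Finset.mem_univ j)
    rw [indic_not_mem hj, sub_zero, mul_one] at this
    exact this
  · intro hJ i
    by_cases hi : i ∈ J
    · rw [indic_mem hi]
      refine le_ciInf fun a => ?_
      obtain ⟨b, hb⟩ := hJ i hi a
      refine le_trans ?_ (le_ciSup (f := fun b : B i a => ∑ j, P i a b j * indic J j) (Finite.bddAbove_range _) b)
      have : ∑ j, P i a b j * indic J j = ∑ j, P i a b j := by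
        apply Finset.sum_congr rfl
        intro j _
        by_cases hj : j ∈ J
        · rw [indic_mem hj, mul_one]
        · rw [hb j hj]; ring
      rw [this, hP1 i a b]
    · rw [indic_not_mem hi]
      refine le_ciInf fun a => ?_
      obtain ⟨b⟩ := ‹∀ i a, Nonempty (B i a)› i a
      exact le_trans (sum_term_nonneg P hP0 J i a b)
        (le_ciSup (f := fun b : B i a => ∑ j, P i a b j * indic J j) (Finite.bddAbove_range _) b)

end AuxSupport

/-- the families `𝓕⁻` and `𝓕⁺` of invariant faces of a payment-free Shapley
operator are uniquely determined by the supports of the transition probabilities. -/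
theorem invariant_faces_depend_only_on_support
    {n : ℕ} {A : Fin n → Type*} {B : ∀ i, A i → Type*}
    [∀ i, Fintype (A i)] [∀ i, Nonempty (A i)]
    [∀ i a, Fintype (B i a)] [∀ i a, Nonempty (B i a)]
    (P Q : ∀ i (a : A i), B i a → Fin n → ℝ)
    (hP0 : ∀ i a b j, 0 ≤ P i a b j) (hP1 : ∀ i a b, ∑ j, P i a b j = 1)
    (hQ0 : ∀ i a b j, 0 ≤ Q i a b j) (hQ1 : ∀ i a b, ∑ j, Q i a b j = 1)
    (hsupp : ∀ i a b j, 0 < P i a b j ↔ 0 < Q i a b j) :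
    Fminus (paymentFreeShapley P) = Fminus (paymentFreeShapley Q) ∧
    Fplus (paymentFreeShapley P) = Fplus (paymentFreeShapley Q) := by
  have hzero : ∀ i a b j, P i a b j = 0 ↔ Q i a b j = 0 := by
    intro i a b j
    constructor
    · intro h
      by_contra hq
      have : 0 < Q i a b j := lt_of_le_of_ne (hQ0 i a b j) (Ne.symm hq)
      have := (hsupp i a b j).mpr this
      linarith
    · intro h
      by_contra hp
      have : 0 < P i a b j := lt_of_le_of_ne (hP0 i a b j) (Ne.symm hp)
      have := (hsupp i a b j).mp this
      linarith
  constructor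
  · rw [fminus_char P hP0 hP1, fminus_char Q hQ0 hQ1]
    ext I
    simp only [Set.mem_setOf_eq]
    constructor
    · intro h i hi
      obtain ⟨a, ha⟩ := h i hi
      exact ⟨a, fun b j hj => (hzero i a b j).mp (ha b j hj)⟩
    · intro h i hi
      obtain ⟨a, ha⟩ := h i hi
      exact ⟨a, fun b j hj => (hzero i a b j).mpr (ha b j hj)⟩
  · rw [fplus_char P hP0 hP1, fplus_char Q hQ0 hQ1]
    ext J
    simp only [Set.mem_setOf_eq]
    constructor
    · intro h i hi a
      obtain ⟨b, hb⟩ := h i hi a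
      exact ⟨b, fun j hj => (hzero i a b j).mp (hb j hj)⟩
    · intro h i hi a
      obtain ⟨b, hb⟩ := h i hi a
      exact ⟨b, fun j hj => (hzero i a b j).mpr (hb j hj)⟩
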